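/- Identify the Cayley algebra Ca = H ⊕ He (Cayley–Dickson construction) with R⁸, and define Spin(8) = {(A,B,C) ∈ SO(8)³ : A(ξη) = B(ξ)C(η) for all ξ, η ∈ Ca}. Then for every (A,B,C) in this set, the conditions A(1) = 1 and C = B̃ are equivalent, where B̃(x) = conj(B(conj(x))). -/

import Mathlib

open Quaternion

/-- The Cayley algebra (octonions) Ca = ℍ ⊕ ℍe via the Cayley–Dickson process,
identified with ℝ⁸. -/
abbrev Ca : Type := ℍ[ℝ] × ℍ[ℝ]

/-- Octonion (Cayley–Dickson) multiplication on Ca = ℍ ⊕ ℍe. -/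
noncomputable def omul (x y : Ca) : Ca :=
  (x.1 * y.1 - star y.2 * x.2, y.2 * x.1 + x.2 * star y.1)

/-- Octonion conjugation. -/
def oconj (x : Ca) : Ca := (star x.1, -x.2)

/-- The squared Euclidean norm on Ca ≅ ℝ⁸. -/
def onormSq (x : Ca) : ℝ := Quaternion.normSq x.1 + Quaternion.normSq x.2

/-- The octonion unit. -/
noncomputable def o1 : Ca := (1, 0)

theorem qK1 (a b c d : ℍ[ℝ]) :
    star a * (a*c - star d*b) + (star a * star d + c * star b)*b
      = ((normSq a + normSq b):ℝ) • c := by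
  have h1 : star a * (a*c) = (normSq a : ℝ) • c := by
    rw [← mul_assoc, star_mul_self, coe_mul_eq_smul]
  have h2 : (c * star b) * b = (normSq b : ℝ) • c := by
    rw [mul_assoc, star_mul_self, mul_coe_eq_smul]
  rw [mul_sub, add_mul, h1, h2, add_smul, ← mul_assoc]
  abel

theorem qK2 (a b c d : ℍ[ℝ]) :
    (d*a + b*star c)*star a - b*(star c*star a - star b*d)
      = ((normSq a + normSq b):ℝ) • d := by
  have h1 : (d*a)*star a = (normSq a : ℝ) • d := by
    rw [mul_assoc, self_mul_star, mul_coe_eq_smul]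
  have h2 : b*(star b*d) = (normSq b : ℝ) • d := by
    rw [← mul_assoc, self_mul_star, coe_mul_eq_smul]
  rw [add_mul, mul_sub, h1, h2, add_smul, mul_assoc]
  abel

theorem qK3 (a b c d : ℍ[ℝ]) :
    (c*star a + star b*d)*a - star b*(d*a - b*c)
      = ((normSq a + normSq b):ℝ) • c := by
  have h1 : (c*star a)*a = (normSq a : ℝ) • c := by
    rw [mul_assoc, star_mul_self, mul_coe_eq_smul]
  have h2 : star b*(b*c) = (normSq b : ℝ) • c := by
    rw [← mul_assoc, star_mul_self, coe_mul_eq_smul]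
  rw [add_mul, mul_sub, h1, h2, add_smul, mul_assoc]
  abel

theorem qK4 (a b c d : ℍ[ℝ]) :
    b*(c*star a + star b*d) + (d*a - b*c)*star a
      = ((normSq a + normSq b):ℝ) • d := by
  have h1 : (d*a)*star a = (normSq a : ℝ) • d := by
    rw [mul_assoc, self_mul_star, mul_coe_eq_smul]
  have h2 : b*(star b*d) = (normSq b : ℝ) • d := by
    rw [← mul_assoc, self_mul_star, coe_mul_eq_smul]
  rw [mul_add, sub_mul, h1, h2, add_smul, ← mul_assoc]
  abel

theorem omul_o1 (x : Ca) : omul x o1 = x := by simp [omul, o1]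
theorem o1_omul (x : Ca) : omul o1 x = x := by simp [omul, o1]
theorem oconj_oconj (x : Ca) : oconj (oconj x) = x := by simp [oconj]
theorem oconj_o1 : oconj o1 = o1 := by simp [oconj, o1]
theorem onormSq_o1 : onormSq o1 = 1 := by simp [onormSq, o1]

theorem oconj_omul (x y : Ca) : oconj (omul x y) = omul (oconj y) (oconj x) := by
  refine Prod.ext ?_ ?_
  · simp [omul, oconj, star_mul]
  · simp [omul, oconj, star_mul]

theorem omul_oconj_self (x : Ca) : omul x (oconj x) = onormSq x • o1 := by
  refine Prod.ext ?_ ?_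
  · simp [omul, oconj, onormSq, o1, self_mul_star, star_mul_self]
    rw [← coe_add, ← coe_mul_eq_smul, mul_one]
  · simp [omul, oconj, o1]

theorem kleft (x y : Ca) : omul (oconj x) (omul x y) = onormSq x • y := by
  obtain ⟨a, b⟩ := x; obtain ⟨c, d⟩ := y
  refine Prod.ext ?_ ?_
  · show star a * (a*c - star d*b) - star (d*a + b*star c) * (-b) = _
    rw [mul_neg, sub_neg_eq_add, star_add, star_mul, star_mul, star_star]
    exact qK1 a b c d
  · show (d*a + b*star c) * star a + (-b) * star (a*c - star d*b) = _
    rw [neg_mul, star_sub, star_mul, star_mul, star_star, ← sub_eq_add_neg]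
    exact qK2 a b c d

theorem kright (x y : Ca) : omul (omul y (oconj x)) x = onormSq x • y := by
  obtain ⟨a, b⟩ := x; obtain ⟨c, d⟩ := y
  refine Prod.ext ?_ ?_
  · show (c*star a - star (-b)*d) * a - star b * ((-b)*c + d*star (star a)) = _
    simp only [star_neg, star_star, neg_mul, sub_neg_eq_add, neg_add_eq_sub]
    exact qK3 a b c d
  · show b * (c*star a - star (-b)*d) + ((-b)*c + d*star (star a)) * star a = _
    simp only [star_neg, star_star, neg_mul, sub_neg_eq_add, neg_add_eq_sub]
    exact qK4 a b c d

/-- polarization bilinear form -/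
noncomputable def ip (u v : Ca) : ℝ := onormSq (u + v) - onormSq u - onormSq v

theorem ip_o1 (x : Ca) : ip x o1 = 2 * x.1.re := by
  simp [ip, onormSq, o1, Quaternion.normSq_def']
  ring

theorem oconj_eq (x : Ca) : oconj x = (2 * x.1.re) • o1 - x := by
  refine Prod.ext ?_ ?_
  · show star x.1 = (2 * x.1.re) • (1:ℍ[ℝ]) - x.1
    rw [star_eq_two_re_sub, ← coe_one, smul_coe, mul_one]
  · show -x.2 = (2 * x.1.re) • (0:ℍ[ℝ]) - x.2
    simp

theorem map_oconj (A : Ca →ₗ[ℝ] Ca) (hA : ∀ x, onormSq (A x) = onormSq x)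
    (h1 : A o1 = o1) (x : Ca) : A (oconj x) = oconj (A x) := by
  have hip : ∀ u v, ip (A u) (A v) = ip u v := by
    intro u v; simp only [ip, ← map_add, hA]
  have hre : (A x).1.re = x.1.re := by
    have := hip x o1
    rw [h1, ip_o1, ip_o1] at this
    linarith
  rw [oconj_eq, map_sub, map_smul, h1, oconj_eq, hre]

theorem stmt9 (A B C : Ca →ₗ[ℝ] Ca)
    (hA : ∀ x, onormSq (A x) = onormSq x) (hB : ∀ x, onormSq (B x) = onormSq x)
    (hC : ∀ x, onormSq (C x) = onormSq x)
    (hdA : LinearMap.det A = 1) (hdB : LinearMap.det B = 1) (hdC : LinearMap.det C = 1)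
    (htri : ∀ ξ η : Ca, A (omul ξ η) = omul (B ξ) (C η)) :
    A o1 = o1 ↔ ∀ x, C x = oconj (B (oconj x)) := by
  have hNb : onormSq (B o1) = 1 := by rw [hB, onormSq_o1]
  constructor
  · intro h1 x
    -- C x = (conj b) * A x
    have hCx : ∀ y, C y = omul (oconj (B o1)) (A y) := by
      intro y
      have h2 : A y = omul (B o1) (C y) := by
        rw [← htri o1 y, o1_omul]
      rw [h2, kleft, hNb, one_smul]
    -- B y = A y * b
    have hCo1 : C o1 = oconj (B o1) := by rw [hCx o1, h1, omul_o1]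
    have hBx : ∀ y, B y = omul (A y) (B o1) := by
      intro y
      have h2 : A y = omul (B y) (oconj (B o1)) := by
        rw [← hCo1, ← htri y o1, omul_o1]
      rw [h2, kright, hNb, one_smul]
    rw [hCx x, hBx (oconj x), oconj_omul, map_oconj A hA h1, oconj_oconj]
  · intro h
    have := htri o1 o1
    rw [omul_o1, h o1, oconj_o1, omul_oconj_self, hNb, one_smul] at this
    exact this
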